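/- Let f : C → D be a discrete Conduché functor between 1-categories. If D is free on a graph (i.e., every arrow of D decomposes uniquely as a composite of a nonempty finite sequence of indecomposable arrows, or is an identity), then C is free on a graph, with generating arrows exactly the preimages under f of the generating arrows of D. -/

import Mathlib

open CategoryTheory

/-- A factorization of an arrow `γ : x ⟶ y` through an intermediate object. -/
structure Factorization {C : Type*} [Category C] {x y : C} (γ : x ⟶ y) : Type _ where
  mid : C
  left : x ⟶ mid
  right : mid ⟶ y
  fac : left ≫ right = γ

/-- The image of a factorization under a functor. -/
def factMap {C D : Type*} [Category C] [Category D] (F : C ⥤ D)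
    {x y : C} (γ : x ⟶ y) (p : Factorization γ) : Factorization (F.map γ) where
  mid := F.obj p.mid
  left := F.map p.left
  right := F.map p.right
  fac := by rw [← F.map_comp, p.fac]

/-- A functor is a discrete Conduché functor if every factorization of the image of an
arrow lifts uniquely to a factorization of that arrow. -/
def IsDiscreteConduche {C D : Type*} [Category C] [Category D] (F : C ⥤ D) : Prop :=
  ∀ ⦃x y : C⦄ (γ : x ⟶ y), Function.Bijective (factMap F γ)

/-- Composable sequences (possibly empty) of arrows belonging to a distinguished set `S`
of generating arrows. -/
inductive GenPath {C : Type*} [Category C] (S : ∀ ⦃x y : C⦄, (x ⟶ y) → Prop) :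
    C → C → Type _
  | nil (x : C) : GenPath S x x
  | cons {x y z : C} (f : x ⟶ y) (hf : S f) (p : GenPath S y z) : GenPath S x z

/-- Evaluation of a composable sequence of generators as an arrow of the category;
the empty sequence evaluates to an identity. -/
def GenPath.eval {C : Type*} [Category C] {S : ∀ ⦃x y : C⦄, (x ⟶ y) → Prop} :
    ∀ {x y : C}, GenPath S x y → (x ⟶ y)
  | _, _, .nil x => 𝟙 x
  | _, _, .cons f _ p => f ≫ p.eval

/-- `S` is a basis for `C` (i.e. `C` is free on the graph with arrows `S`) if every arrow
of `C` is the composite of a unique composable sequence of arrows of `S`. -/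
def IsBasis {C : Type*} [Category C] (S : ∀ ⦃x y : C⦄, (x ⟶ y) → Prop) : Prop :=
  ∀ {x y : C} (γ : x ⟶ y), ∃! p : GenPath S x y, p.eval = γ

section Aux

variable {C D : Type*} [Category C] [Category D] (F : C ⥤ D)
  (S : ∀ ⦃x y : D⦄, (x ⟶ y) → Prop)

/-- Map of generator paths along a functor. -/
def pathMap : ∀ {x y : C}, GenPath (fun ⦃x y : C⦄ (γ : x ⟶ y) => S (F.map γ)) x y →
    GenPath S (F.obj x) (F.obj y)
  | _, _, .nil x => .nil (F.obj x)
  | _, _, .cons f hf p => .cons (F.map f) hf (pathMap p)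

lemma eval_pathMap : ∀ {x y : C} (p : GenPath (fun ⦃x y : C⦄ (γ : x ⟶ y) => S (F.map γ)) x y),
    (pathMap F S p).eval = F.map p.eval
  | _, _, .nil x => by simp [pathMap, GenPath.eval]
  | _, _, .cons f hf p => by simp [pathMap, GenPath.eval, eval_pathMap p]

lemma Factorization.ext' {x y : C} {γ : x ⟶ y} {p q : Factorization γ}
    (hm : p.mid = q.mid) (hl : HEq p.left q.left) (hr : HEq p.right q.right) : p = q := by
  obtain ⟨m, l, r, h⟩ := p
  obtain ⟨m', l', r', h'⟩ := q
  dsimp at hm hl hr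
  subst hm
  obtain rfl := eq_of_heq hl
  obtain rfl := eq_of_heq hr
  rfl

lemma heq_eval {d d' e : D} (h : d = d') (a : GenPath S d e) (b : GenPath S d' e)
    (hab : HEq a b) : HEq a.eval b.eval := by
  subst h
  rw [eq_of_heq hab]

lemma heq_id_eqToHom {a b : D} (h : a = b) (g : a ⟶ b) (hg : HEq (𝟙 a) g) :
    g = eqToHom h := by
  subst h
  exact (eq_of_heq hg).symm

lemma heq_eqToHom_id {a b : D} (h : a = b) : HEq (eqToHom h) (𝟙 a) := by
  subst h
  rfl

lemma heq_id_eqToHom' {a b : D} (h : a = b) : HEq (𝟙 b) (eqToHom h) := by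
  subst h
  rfl

lemma exists_lift (hF : IsDiscreteConduche F) :
    ∀ {d e : D} (q : GenPath S d e) {x y : C} (γ : x ⟶ y)
      (hx : d = F.obj x) (hy : e = F.obj y), HEq q.eval (F.map γ) →
      ∃ p : GenPath (fun ⦃x y : C⦄ (γ : x ⟶ y) => S (F.map γ)) x y,
        p.eval = γ ∧ HEq (pathMap F S p) q := by
  intro d e q
  induction q with
  | nil d =>
    intro x y γ hx hy hq
    subst hx
    -- hy : F.obj x = F.obj y, hq : HEq (𝟙 (F.obj x)) (F.map γ)
    have hmap : F.map γ = eqToHom hy := heq_id_eqToHom hy _ hq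
    have himg : factMap F γ ⟨y, γ, 𝟙 y, Category.comp_id γ⟩
        = factMap F γ ⟨x, 𝟙 x, γ, Category.id_comp γ⟩ := by
      apply Factorization.ext'
      · exact hy.symm
      · show HEq (F.map γ) (F.map (𝟙 x))
        rw [hmap, F.map_id]
        exact heq_eqToHom_id hy
      · show HEq (F.map (𝟙 y)) (F.map γ)
        rw [hmap, F.map_id]
        exact heq_id_eqToHom' hy
    have hP := (hF γ).1 himg
    injection hP with h1 h2 h3
    subst h1
    obtain rfl := eq_of_heq h2
    exact ⟨.nil _, rfl, HEq.rfl⟩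
  | cons g hg q' ih =>
    intro x y γ hx hy hq
    subst hx
    subst hy
    have hq' : F.map γ = g ≫ GenPath.eval q' := (eq_of_heq hq).symm
    obtain ⟨P, hP⟩ := (hF γ).2 ⟨_, g, q'.eval, hq'.symm⟩
    obtain ⟨z, a, b, hab⟩ := P
    have hP' : (⟨F.obj z, F.map a, F.map b, _⟩ : Factorization (F.map γ))
        = ⟨_, g, q'.eval, hq'.symm⟩ := hP
    injection hP' with hm hl hr
    subst hm
    obtain rfl : F.map a = g := eq_of_heq hl
    have hrb : F.map b = q'.eval := eq_of_heq hr
    obtain ⟨p', hp'e, hp'm⟩ := ih b rfl rfl (heq_of_eq hrb.symm)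
    obtain rfl : pathMap F S p' = q' := eq_of_heq hp'm
    refine ⟨.cons a hg p', ?_, HEq.rfl⟩
    simp [GenPath.eval, hp'e, hab]

lemma lift_unique (hF : IsDiscreteConduche F) :
    ∀ {x y : C} (p₁ p₂ : GenPath (fun ⦃x y : C⦄ (γ : x ⟶ y) => S (F.map γ)) x y),
      p₁.eval = p₂.eval → pathMap F S p₁ = pathMap F S p₂ → p₁ = p₂ := by
  intro x y p₁
  induction p₁ with
  | nil x =>
    intro p₂ he hm
    cases p₂ with
    | nil => rfl
    | cons f hf t => simp [pathMap] at hm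
  | cons f₁ hf₁ t₁ ih =>
    intro p₂ he hm
    cases p₂ with
    | nil => simp [pathMap] at hm
    | cons f₂ hf₂ t₂ =>
      simp only [GenPath.eval] at he
      have hm' : GenPath.cons (F.map f₁) hf₁ (pathMap F S t₁)
          = GenPath.cons (F.map f₂) hf₂ (pathMap F S t₂) := hm
      injection hm' with hi1 h1 hi3 h2 h4
      have hre : HEq (pathMap F S t₁).eval (pathMap F S t₂).eval :=
        heq_eval S h1 (pathMap F S t₁) (pathMap F S t₂) h4
      rw [eval_pathMap, eval_pathMap] at hre
      have himg : factMap F (f₁ ≫ t₁.eval) ⟨_, f₁, t₁.eval, rfl⟩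
          = factMap F (f₁ ≫ t₁.eval) ⟨_, f₂, t₂.eval, he.symm⟩ :=
        Factorization.ext' h1 h2 hre
      have hP := (hF (f₁ ≫ t₁.eval)).1 himg
      injection hP with k1 k2 k3
      subst k1
      obtain rfl := eq_of_heq k2
      obtain rfl : t₁ = t₂ := ih t₂ (eq_of_heq k3) (eq_of_heq h4)
      rfl

end Aux

/-- If `f : C → D` is a discrete Conduché functor and `D` is free on a graph with
generating arrows `S`, then `C` is free on a graph whose generating arrows are exactly
the preimages under `f` of the arrows of `S`. -/
theorem isBasis_preimage_of_isDiscreteConduche {C D : Type*} [Category C] [Category D]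
    (F : C ⥤ D) (hF : IsDiscreteConduche F) (S : ∀ ⦃x y : D⦄, (x ⟶ y) → Prop)
    (hS : IsBasis S) :
    IsBasis (fun ⦃x y : C⦄ (γ : x ⟶ y) => S (F.map γ)) := by
  intro x y γ
  obtain ⟨q, hq, huq⟩ := hS (F.map γ)
  obtain ⟨p, hpe, hpm⟩ := exists_lift F S hF q γ rfl rfl (heq_of_eq hq)
  refine ⟨p, hpe, ?_⟩
  intro p' hp'
  apply lift_unique F S hF p' p
  · rw [hpe, hp']
  · rw [eq_of_heq hpm]
    exact huq _ ((eval_pathMap F S p').trans (by rw [hp']))
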